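/- arXiv:0906.3643 — 6 statements merged into one kernel-verified Lean document; each statement's English description precedes it below -/
import Mathlib

section
/- Let G be a pseudo-tree: a multigraph whose underlying simple graph is a tree with edges 1,…,m having multiplicities s_1,…,s_m. Then the Banzhaf value of any parallel edge i_1 corresponding to underlying edge i equals ∏_{j≠i} (2^{s_j} − 1). -/
open Finset
open scoped Classical

/-- The Banzhaf value of player `p` in the simple game with winning predicate `win`:
the number of coalitions in which `p` is critical. -/
noncomputable def banzhafVal {E : Type*} [Fintype E] [DecidableEq E]
    (win : Finset E → Prop) (p : E) : ℕ :=
  (Finset.univ.filter (fun S : Finset E => p ∈ S ∧ win S ∧ ¬ win (S.erase p))).card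

/-- The Banzhaf index of player `p`: its Banzhaf value divided by the sum of all
Banzhaf values. -/
noncomputable def banzhafIdx {E : Type*} [Fintype E] [DecidableEq E]
    (win : Finset E → Prop) (p : E) : ℚ :=
  (banzhafVal win p : ℚ) / ∑ q : E, (banzhafVal win q : ℚ)

/-- The Shapley-Shubik value of player `p`:
`κ_p = Σ_{S ∋ p, win S, ¬ win (S \ {p})} (|S|-1)! (n-|S|)!`. -/
noncomputable def shapVal {E : Type*} [Fintype E] [DecidableEq E]
    (win : Finset E → Prop) (p : E) : ℕ :=
  ∑ S ∈ Finset.univ.filter (fun S : Finset E => p ∈ S ∧ win S ∧ ¬ win (S.erase p)),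
    (S.card - 1).factorial * (Fintype.card E - S.card).factorial

/-- In the spanning connectivity game of a pseudo-tree with underlying tree edges `1,…,m`
of multiplicities `s 1, …, s m`, a coalition of parallel edges is winning iff it contains
at least one parallel copy of each underlying edge. -/
def PseudoTreeWin {m : ℕ} {s : Fin m → ℕ} (C : Finset (Σ j : Fin m, Fin (s j))) : Prop :=
  ∀ j : Fin m, ∃ k : Fin (s j), (⟨j, k⟩ : Σ j : Fin m, Fin (s j)) ∈ C

/-- In a pseudo-tree, the Banzhaf value of any parallel copy of underlying edge `i`
equals `∏_{j ≠ i} (2^{s_j} - 1)`. -/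
theorem stmt_2 (m : ℕ) (s : Fin m → ℕ) (hs : ∀ j, 1 ≤ s j) (i : Fin m) (k : Fin (s i)) :
    banzhafVal (PseudoTreeWin (s := s)) ⟨i, k⟩
      = ∏ j ∈ Finset.univ.erase i, (2 ^ s j - 1) := by
  classical
  set p : (Σ j : Fin m, Fin (s j)) := ⟨i, k⟩ with hp
  -- characterization of critical coalitions
  have key : ∀ S : Finset (Σ j : Fin m, Fin (s j)),
      (p ∈ S ∧ PseudoTreeWin S ∧ ¬ PseudoTreeWin (S.erase p)) ↔
      ((∀ l : Fin (s i), (⟨i, l⟩ : Σ j, Fin (s j)) ∈ S ↔ l = k) ∧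
        ∀ j : Fin m, j ≠ i → ∃ l : Fin (s j), (⟨j, l⟩ : Σ j, Fin (s j)) ∈ S) := by
    intro S
    constructor
    · rintro ⟨hpS, hwin, hlose⟩
      rw [PseudoTreeWin] at hlose
      push_neg at hlose
      obtain ⟨j0, hj0⟩ := hlose
      have hj0i : j0 = i := by
        by_contra h
        obtain ⟨l, hl⟩ := hwin j0
        exact hj0 l (Finset.mem_erase.mpr ⟨by simp [hp, Sigma.mk.inj_iff, h], hl⟩)
      subst hj0i
      refine ⟨fun l => ⟨fun hl => ?_, fun h => h ▸ hpS⟩, fun j hj => hwin j⟩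
      by_contra hne
      exact hj0 l (Finset.mem_erase.mpr ⟨by simp [hp, Sigma.mk.inj_iff, hne], hl⟩)
    · rintro ⟨h1, h2⟩
      refine ⟨(h1 k).mpr rfl, fun j => ?_, ?_⟩
      · by_cases hj : j = i
        · subst hj; exact ⟨k, (h1 k).mpr rfl⟩
        · exact h2 j hj
      · intro hcon
        obtain ⟨l, hl⟩ := hcon i
        rw [Finset.mem_erase] at hl
        have hlk := (h1 l).mp hl.2
        subst hlk
        exact hl.1 rfl
  -- the target family of fibers
  set t : ∀ j : Fin m, Finset (Finset (Fin (s j))) := fun j =>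
    univ.filter (fun T => if j = i then
      (∀ l, l ∈ T ↔ (⟨j, l⟩ : Σ a, Fin (s a)) = p) else T.Nonempty) with ht
  have hti : t i = {({k} : Finset (Fin (s i)))} := by
    ext T
    simp only [ht, mem_filter, mem_univ, true_and, if_pos rfl, mem_singleton]
    constructor
    · intro h; ext l; simp [h l, hp, Sigma.mk.inj_iff]
    · rintro rfl l; simp [hp, Sigma.mk.inj_iff]
  have htj : ∀ j, j ≠ i → (t j).card = 2 ^ s j - 1 := by
    intro j hj
    have h1 : t j = univ.erase (∅ : Finset (Fin (s j))) := by
      ext T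
      simp [ht, if_neg hj, Finset.nonempty_iff_ne_empty]
    rw [h1, Finset.card_erase_of_mem (mem_univ _), Finset.card_univ,
      Fintype.card_finset, Fintype.card_fin]
  have hB : (Fintype.piFinset t).card = ∏ j ∈ Finset.univ.erase i, (2 ^ s j - 1) := by
    rw [Fintype.card_piFinset, ← Finset.mul_prod_erase _ _ (mem_univ i), hti,
      Finset.card_singleton, one_mul]
    exact Finset.prod_congr rfl fun j hj => htj j (Finset.mem_erase.mp hj).1
  rw [banzhafVal, ← hB]
  apply Finset.card_nbij'
    (fun S => fun j => univ.filter (fun l => (⟨j, l⟩ : Σ a, Fin (s a)) ∈ S))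
    (fun f => univ.sigma f)
  · intro S hS
    rw [Finset.mem_coe, mem_filter] at hS
    obtain ⟨h1, h2⟩ := (key S).mp hS.2
    rw [Finset.mem_coe, Fintype.mem_piFinset]
    intro j
    simp only [ht, mem_filter, mem_univ, true_and]
    by_cases hj : j = i
    · subst hj
      rw [if_pos rfl]
      intro l
      simp only [mem_filter, mem_univ, true_and, h1 l, hp, Sigma.mk.inj_iff, heq_eq_eq,
        true_and]
    · rw [if_neg hj]
      obtain ⟨l, hl⟩ := h2 j hj
      exact ⟨l, by simp [hl]⟩
  · intro f hf
    rw [Finset.mem_coe, Fintype.mem_piFinset] at hf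
    rw [Finset.mem_coe, mem_filter]
    refine ⟨mem_univ _, (key _).mpr ⟨fun l => ?_, fun j hj => ?_⟩⟩
    · have := hf i
      simp only [ht, mem_filter, mem_univ, true_and, if_pos rfl] at this
      simp [Finset.mem_sigma, this l, hp, Sigma.mk.inj_iff]
    · have := hf j
      simp only [ht, mem_filter, mem_univ, true_and, if_neg hj] at this
      obtain ⟨l, hl⟩ := this
      exact ⟨l, by simp [Finset.mem_sigma, hl]⟩
  · intro S hS
    ext ⟨j, l⟩
    simp [Finset.mem_sigma]
  · intro f hf
    funext j
    ext l
    simp [Finset.mem_sigma]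
end

section
/- In a pseudo-tree with underlying tree edges 1,…,m of multiplicities s_1,…,s_m, the Banzhaf index of a parallel edge of underlying edge i equals ∏_{j≠i}(2^{s_j}−1) / Σ_{k=1}^m s_k ∏_{j≠k}(2^{s_j}−1). -/
open Finset
open scoped Classical

lemma card_nonempty_finsets (α : Type*) [Fintype α] [DecidableEq α] :
    ((univ : Finset (Finset α)).filter (fun A => A.Nonempty)).card = 2 ^ Fintype.card α - 1 := by
  have h : ((univ : Finset (Finset α)).filter (fun A => A.Nonempty)) = univ.erase ∅ := by
    ext A
    simp [Finset.nonempty_iff_ne_empty]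
  rw [h, card_erase_of_mem (mem_univ _), card_univ, Fintype.card_finset]

lemma banzhafVal_pt {m : ℕ} (s : Fin m → ℕ) (i : Fin m) (k : Fin (s i)) :
    banzhafVal (PseudoTreeWin (s := s)) ⟨i, k⟩
      = ∏ j ∈ Finset.univ.erase i, (2 ^ s j - 1) := by
  classical
  set E := Σ j : Fin m, Fin (s j)
  set p : E := ⟨i, k⟩
  set t : ∀ j : Fin m, Finset (Finset (Fin (s j))) := fun j =>
    (univ : Finset (Finset (Fin (s j)))).filter
      (fun A => A.Nonempty ∧ (j = i → ∀ a ∈ A, (⟨j, a⟩ : E) = p)) with ht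
  have hcard : banzhafVal (PseudoTreeWin (s := s)) p = (Fintype.piFinset t).card := by
    unfold banzhafVal
    apply Finset.card_bij' (i := fun S _ => fun j => univ.filter (fun a => (⟨j, a⟩ : E) ∈ S))
      (j := fun f _ => univ.filter (fun x : E => x.2 ∈ f x.1))
    · -- hi: maps into target
      intro S hS
      simp only [mem_filter, mem_univ, true_and] at hS
      obtain ⟨hpS, hwin, hnot⟩ := hS
      rw [Fintype.mem_piFinset]
      intro j
      simp only [ht, mem_filter, mem_univ, true_and]
      constructor
      · obtain ⟨a, ha⟩ := hwin j
        exact ⟨a, by simp [ha]⟩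
      · rintro rfl a ha
        have ha' : (⟨j, a⟩ : E) ∈ S := ha
        by_contra hne
        apply hnot
        intro j'
        by_cases hj : j' = j
        · subst hj
          exact ⟨a, Finset.mem_erase.2 ⟨hne, ha'⟩⟩
        · obtain ⟨b, hb⟩ := hwin j'
          refine ⟨b, Finset.mem_erase.2 ⟨?_, hb⟩⟩
          intro hx
          exact hj (congrArg Sigma.fst hx)
    · -- hj: inverse maps into source
      intro f hf
      rw [Fintype.mem_piFinset] at hf
      simp only [ht, mem_filter, mem_univ, true_and] at hf
      simp only [mem_filter, mem_univ, true_and]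
      refine ⟨?_, ?_, ?_⟩
      · obtain ⟨⟨a, ha⟩, hall⟩ := hf i
        have h2 : (⟨i, a⟩ : E) = p := hall rfl a ha
        have hk : a = k := eq_of_heq (Sigma.mk.inj_iff.mp h2).2
        show k ∈ f i
        exact hk ▸ ha
      · intro j
        obtain ⟨⟨a, ha⟩, -⟩ := hf j
        exact ⟨a, by simp [ha]⟩
      · intro hwin
        obtain ⟨a, ha⟩ := hwin i
        have haS := Finset.mem_of_mem_erase ha
        simp only [mem_filter, mem_univ, true_and] at haS
        have := (hf i).2 rfl a haS
        exact (Finset.ne_of_mem_erase ha) this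
    · -- left inverse
      intro S hS
      ext ⟨j, a⟩
      simp
    · -- right inverse
      intro f hf
      funext j
      ext a
      simp
  rw [hcard, Fintype.card_piFinset]
  have hti : ∀ j : Fin m, (t j).card = if j = i then 1 else 2 ^ s j - 1 := by
    intro j
    by_cases hj : j = i
    · subst hj
      rw [if_pos rfl]
      have : t j = {({k} : Finset (Fin (s j)))} := by
        ext A
        simp only [ht, mem_filter, mem_univ, true_and, mem_singleton]
        constructor
        · rintro ⟨⟨a, ha⟩, hall⟩
          have key : ∀ b ∈ A, b = k := by
            intro b hb
            have := hall (by trivial) b hb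
            exact eq_of_heq (Sigma.mk.inj_iff.mp this).2
          apply Finset.eq_singleton_iff_unique_mem.2
          exact ⟨by rw [← key a ha]; exact ha, key⟩
        · rintro rfl
          exact ⟨⟨k, mem_singleton_self k⟩, fun _ b hb => by
            rw [mem_singleton] at hb; simp [hb, p]⟩
      rw [this, card_singleton]
    · rw [if_neg hj]
      have : t j = (univ : Finset (Finset (Fin (s j)))).filter (fun A => A.Nonempty) := by
        ext A
        simp only [ht, mem_filter, mem_univ, true_and]
        exact ⟨fun h => h.1, fun h => ⟨h, fun hij => absurd hij hj⟩⟩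
      rw [this, card_nonempty_finsets, Fintype.card_fin]
  calc ∏ j, (t j).card = ∏ j, if j = i then 1 else 2 ^ s j - 1 :=
        Finset.prod_congr rfl (fun j _ => hti j)
    _ = ∏ j ∈ univ.erase i, (2 ^ s j - 1) := by
        rw [← Finset.mul_prod_erase univ _ (mem_univ i), if_pos rfl, one_mul]
        exact Finset.prod_congr rfl (fun j hj => if_neg (Finset.ne_of_mem_erase hj))

lemma hcast_lemma {m : ℕ} (s : Fin m → ℕ) (i' : Fin m) :
    ((∏ j ∈ univ.erase i', (2 ^ s j - 1) : ℕ) : ℚ)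
      = ∏ j ∈ univ.erase i', ((2 : ℚ) ^ s j - 1) := by
  rw [Nat.cast_prod]
  refine Finset.prod_congr rfl fun j _ => ?_
  have h1 : (1 : ℕ) ≤ 2 ^ s j := Nat.one_le_two_pow
  rw [Nat.cast_sub h1]
  push_cast
  ring

/-- In a pseudo-tree, the Banzhaf index of any parallel copy of underlying edge `i` equals
`∏_{j≠i}(2^{s_j}−1) / Σ_{k=1}^m s_k ∏_{j≠k}(2^{s_j}−1)`. -/
theorem stmt_3 (m : ℕ) (s : Fin m → ℕ) (hs : ∀ j, 1 ≤ s j) (i : Fin m) (k : Fin (s i)) :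
    banzhafIdx (PseudoTreeWin (s := s)) ⟨i, k⟩
      = (∏ j ∈ Finset.univ.erase i, ((2 : ℚ) ^ s j - 1))
        / ∑ k' : Fin m, (s k' : ℚ) * ∏ j ∈ Finset.univ.erase k', ((2 : ℚ) ^ s j - 1) := by
  unfold banzhafIdx
  congr 1
  · rw [banzhafVal_pt, hcast_lemma]
  · rw [← Finset.univ_sigma_univ, Finset.sum_sigma]
    refine Finset.sum_congr rfl fun j _ => ?_
    calc ∑ a : Fin (s j), (banzhafVal (PseudoTreeWin (s := s)) ⟨j, a⟩ : ℚ)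
        = ∑ _a : Fin (s j), ∏ l ∈ univ.erase j, ((2 : ℚ) ^ s l - 1) := by
          refine Finset.sum_congr rfl fun a _ => ?_
          rw [banzhafVal_pt, hcast_lemma]
      _ = (s j : ℚ) * ∏ l ∈ univ.erase j, ((2 : ℚ) ^ s l - 1) := by
          rw [Finset.sum_const, card_univ, Fintype.card_fin, nsmul_eq_mul]
end

section
/- The (m+1)×(m+1) matrix A with entries A_{ij} = (i+j−2)! (for 1 ≤ i,j ≤ m+1) has determinant (1!·2!⋯m!)^2; in particular A is invertible over the rationals. -/
open Finset Matrix

lemma choose_sq_sum (m i j : ℕ) (hj : j ≤ m) :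
    ∑ k ∈ Finset.range (m+1), i.choose k * j.choose k = (i+j).choose j := by
  rw [Nat.add_choose_eq, Finset.Nat.sum_antidiagonal_eq_sum_range_succ
    (fun a b => i.choose a * j.choose b)]
  rw [← Finset.sum_range_add_sum_Ico _ (Nat.succ_le_succ hj)]
  have h0 : ∑ k ∈ Finset.Ico (j+1) (m+1), i.choose k * j.choose k = 0 := by
    apply Finset.sum_eq_zero
    intro k hk
    rw [Nat.choose_eq_zero_of_lt (Finset.mem_Ico.mp hk).1, mul_zero]
  rw [h0, add_zero]
  refine Finset.sum_congr rfl fun k hk => ?_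
  rw [Nat.choose_symm (Nat.lt_succ_iff.mp (Finset.mem_range.mp hk))]

/-- The (m+1)×(m+1) Hankel matrix `A` with `A_{ij} = (i+j-2)!` (indices `1 ≤ i,j ≤ m+1`,
i.e. `(i+j)!` with 0-based indices) has determinant `(1!·2!⋯m!)^2`; in particular it is
invertible over the rationals. -/
theorem stmt_6 (m : ℕ) :
    (Matrix.of (fun i j : Fin (m + 1) => ((i.val + j.val).factorial : ℚ))).det
        = (∏ k ∈ Finset.range (m + 1), (k.factorial : ℚ)) ^ 2 ∧
      IsUnit (Matrix.of (fun i j : Fin (m + 1) => ((i.val + j.val).factorial : ℚ))) := by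
  set M : Matrix (Fin (m+1)) (Fin (m+1)) ℚ :=
    Matrix.of (fun i k : Fin (m+1) => ((i.val.factorial * i.val.choose k.val : ℕ) : ℚ)) with hM
  have hfact : Matrix.of (fun i j : Fin (m + 1) => ((i.val + j.val).factorial : ℚ))
      = M * Mᵀ := by
    ext i j
    simp only [Matrix.mul_apply, Matrix.transpose_apply, Matrix.of_apply, hM]
    rw [Fin.sum_univ_eq_sum_range (fun k =>
      ((i.val.factorial * i.val.choose k : ℕ) : ℚ) * ((j.val.factorial * j.val.choose k : ℕ) : ℚ))]
    have key : (i.val + j.val).factorial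
        = ∑ k ∈ Finset.range (m+1),
          (i.val.factorial * i.val.choose k) * (j.val.factorial * j.val.choose k) := by
      have : ∑ k ∈ Finset.range (m+1),
          (i.val.factorial * i.val.choose k) * (j.val.factorial * j.val.choose k)
          = (i.val.factorial * j.val.factorial) *
            ∑ k ∈ Finset.range (m+1), i.val.choose k * j.val.choose k := by
        rw [Finset.mul_sum]; apply Finset.sum_congr rfl; intros; ring
      rw [this, choose_sq_sum m i.val j.val (Nat.lt_succ_iff.mp j.isLt)]
      rw [← Nat.add_choose_mul_factorial_mul_factorial (i.val) (j.val)]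
      ring_nf
    push_cast [key]
    rfl
  have hdet : M.det = ∏ k ∈ Finset.range (m + 1), (k.factorial : ℚ) := by
    rw [Matrix.det_of_lowerTriangular M]
    · rw [← Fin.prod_univ_eq_prod_range (fun k => ((k.factorial : ℚ)))]
      refine Finset.prod_congr rfl fun i _ => ?_
      simp [hM]
    · intro i j hij
      have h : i.val < j.val := hij
      simp only [hM, Matrix.of_apply]
      rw [Nat.choose_eq_zero_of_lt h]
      simp
  have hd : (Matrix.of (fun i j : Fin (m + 1) => ((i.val + j.val).factorial : ℚ))).det
      = (∏ k ∈ Finset.range (m + 1), (k.factorial : ℚ)) ^ 2 := by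
    rw [hfact, Matrix.det_mul, Matrix.det_transpose, hdet, sq]
  refine ⟨hd, ?_⟩
  rw [Matrix.isUnit_iff_isUnit_det, hd]
  apply IsUnit.pow
  rw [isUnit_iff_ne_zero]
  apply Finset.prod_ne_zero_iff.mpr
  intro k _
  exact_mod_cast Nat.factorial_ne_zero k
end

section
/- Let G = (V,E) be a connected graph, and let G_i be obtained from G by attaching to a fixed vertex v ∈ V a path of i+1 new edges (i ≥ 0), with x the edge of the path incident to v. Let N_r be the number of connected spanning subgraphs of G with r edges and m = |E|. Then the Shapley-Shubik value of x in the spanning connectivity game on G_i satisfies κ_x(G_i) = Σ_{r=0}^{m} (r+i)! · N_r · (m−r)!. -/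
open Finset
open scoped Classical

/-- Reachability between vertices using only edges in the coalition `S`. -/
def Connects {V E : Type*} (ends : E → V × V) (S : Finset E) (a b : V) : Prop :=
  Relation.ReflTransGen (fun u w => ∃ e ∈ S, ends e = (u, w) ∨ ends e = (w, u)) a b

/-- `(V, S)` is a connected spanning subgraph of the multigraph with edge-endpoint map `ends`. -/
def IsCSS {V E : Type*} (ends : E → V × V) (S : Finset E) : Prop :=
  ∀ a b : V, Connects ends S a b

/-- The Shapley-Shubik index of player `p`: `φ_p = κ_p / n!`. -/
noncomputable def shapIdx {E : Type*} [Fintype E] [DecidableEq E]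
    (win : Finset E → Prop) (p : E) : ℚ :=
  (shapVal win p : ℚ) / (Fintype.card E).factorial

/-- Attaching to the vertex `v` of `G` a path of `i+1` new edges, with new path vertices
`Fin (i+1)`; the new edge `Sum.inr 0` (the edge `x`) is incident to `v`, and for `k ≠ 0` the
new edge `Sum.inr k` joins path vertex `k-1` to path vertex `k`. -/
def pathExt {V E : Type*} (ends : E → V × V) (v : V) (i : ℕ) :
    E ⊕ Fin (i + 1) → (V ⊕ Fin (i + 1)) × (V ⊕ Fin (i + 1))
  | Sum.inl e => (Sum.inl (ends e).1, Sum.inl (ends e).2)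
  | Sum.inr k =>
      (if k.val = 0 then Sum.inl v
        else Sum.inr ⟨k.val - 1, Nat.lt_of_le_of_lt (Nat.sub_le _ _) k.isLt⟩, Sum.inr k)

section Aux

variable {V E : Type*}

lemma connects_symm (ends : E → V × V) (S : Finset E) {a b : V}
    (h : Connects ends S a b) : Connects ends S b a := by
  refine @Std.Symm.symm _ _ (@Relation.ReflTransGen.stdSymm _ _ ⟨?_⟩) _ _ h
  rintro u w ⟨e, he, hor⟩
  exact ⟨e, he, hor.symm⟩

lemma connects_step (ends : E → V × V) (S : Finset E) {e : E} (he : e ∈ S) :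
    Connects ends S (ends e).1 (ends e).2 :=
  Relation.ReflTransGen.single ⟨e, he, Or.inl rfl⟩

lemma reflTransGen_invariant {α : Type*} {r : α → α → Prop} (P : α → Prop)
    (inv : ∀ u w, r u w → (P u ↔ P w)) {a b : α}
    (h : Relation.ReflTransGen r a b) : P a ↔ P b := by
  induction h with
  | refl => rfl
  | tail _ hbc ih => exact ih.trans (inv _ _ hbc)

lemma reflTransGen_lift' {α β : Type*} {r : α → α → Prop} {r' : β → β → Prop} (f : α → β)
    (h : ∀ a b, r a b → Relation.ReflTransGen r' (f a) (f b)) {a b : α}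
    (hab : Relation.ReflTransGen r a b) : Relation.ReflTransGen r' (f a) (f b) := by
  induction hab with
  | refl => exact Relation.ReflTransGen.refl
  | tail _ hbc ih => exact ih.trans (h _ _ hbc)

/-- The restriction of a coalition in the extended graph to the original edges. -/
noncomputable def restr {E : Type*} [Fintype E] (i : ℕ)
    (S : Finset (E ⊕ Fin (i + 1))) : Finset E :=
  Finset.univ.filter (fun e => Sum.inl e ∈ S)

open Finset in
/-- Characterization of winning coalitions in the extended graph. -/
lemma win_iff [Fintype E] (ends : E → V × V) (v : V) (i : ℕ)
    (S : Finset (E ⊕ Fin (i + 1))) :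
    IsCSS (pathExt ends v i) S ↔
      (∀ k : Fin (i + 1), Sum.inr k ∈ S) ∧
        IsCSS ends (restr i S) := by
  rw [restr]
  classical
  constructor
  · intro hS
    constructor
    · intro k
      by_contra hk
      -- cut argument
      set P : V ⊕ Fin (i + 1) → Prop := fun s => match s with
        | Sum.inl _ => False
        | Sum.inr j => k ≤ j with hP
      have inv : ∀ u w, (∃ e ∈ S, pathExt ends v i e = (u, w) ∨ pathExt ends v i e = (w, u))
          → (P u ↔ P w) := by
        rintro u w ⟨e, he, hor⟩
        have key : ∀ u' w', pathExt ends v i e = (u', w') → (P u' ↔ P w') := by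
          rintro u' w' heq
          cases e with
          | inl e0 =>
            simp only [pathExt] at heq
            obtain ⟨h1, h2⟩ := Prod.mk.injEq .. ▸ heq
            subst h1; subst h2; simp [hP]
          | inr j =>
            have hjk : j ≠ k := by rintro rfl; exact hk he
            simp only [pathExt] at heq
            obtain ⟨h1, h2⟩ := Prod.mk.injEq .. ▸ heq
            subst h2
            by_cases hj0 : j.val = 0
            · rw [if_pos hj0] at h1
              subst h1
              simp only [hP]
              constructor
              · intro h; exact h.elim
              · intro (h : k ≤ j)
                exact hjk (le_antisymm (by omega) (Fin.le_def.mpr (by omega))).symm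
            · rw [if_neg hj0] at h1
              subst h1
              simp only [hP, Fin.le_def]
              have : j.val ≠ k.val := fun h => hjk (Fin.ext h)
              omega
        rcases hor with h | h
        · exact key _ _ h
        · exact (key _ _ h).symm
      have hcon := hS (Sum.inr k) (Sum.inl v)
      have : P (Sum.inr k) ↔ P (Sum.inl v) := reflTransGen_invariant P inv hcon
      simp [hP] at this
    · intro a b
      have hcon := hS (Sum.inl a) (Sum.inl b)
      have := reflTransGen_lift' (r' := fun u w => ∃ e ∈ Finset.univ.filter
            (fun e => Sum.inl e ∈ S), ends e = (u, w) ∨ ends e = (w, u))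
          (Sum.elim id (fun _ => v)) ?_ hcon
      · exact this
      · rintro u w ⟨e, he, hor⟩
        cases e with
        | inl e0 =>
          have he0 : e0 ∈ Finset.univ.filter (fun e => Sum.inl e ∈ S) := by
            simp [he]
          rcases hor with h | h <;>
          · simp only [pathExt] at h
            obtain ⟨h1, h2⟩ := Prod.mk.injEq .. ▸ h
            subst h1; subst h2
            first
            | exact Relation.ReflTransGen.single ⟨e0, he0, Or.inl rfl⟩
            | exact Relation.ReflTransGen.single ⟨e0, he0, Or.inr rfl⟩
        | inr j =>
          have : Sum.elim id (fun _ => v) u = Sum.elim id (fun _ => v) w := by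
            rcases hor with h | h <;>
            · simp only [pathExt] at h
              obtain ⟨h1, h2⟩ := Prod.mk.injEq .. ▸ h
              subst h1; subst h2
              by_cases hj0 : j.val = 0 <;> simp [hj0]
          rw [this]
  · rintro ⟨hpath, hcss⟩
    -- every path vertex connects to `Sum.inl v`
    have hto : ∀ n : ℕ, ∀ hn : n < i + 1,
        Connects (pathExt ends v i) S (Sum.inr ⟨n, hn⟩) (Sum.inl v) := by
      intro n
      induction n with
      | zero =>
        intro hn
        refine Relation.ReflTransGen.single ⟨Sum.inr ⟨0, hn⟩, hpath _, Or.inr ?_⟩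
        simp [pathExt]
      | succ n ih =>
        intro hn
        have step : Connects (pathExt ends v i) S (Sum.inr ⟨n + 1, hn⟩)
            (Sum.inr ⟨n, Nat.lt_of_succ_lt hn⟩) := by
          refine Relation.ReflTransGen.single ⟨Sum.inr ⟨n + 1, hn⟩, hpath _, Or.inr ?_⟩
          simp [pathExt]
        exact step.trans (ih _)
    have hvert : ∀ s : V ⊕ Fin (i + 1), Connects (pathExt ends v i) S s (Sum.inl v) := by
      rintro (a | k)
      · have := hcss a v
        refine reflTransGen_lift' (r' := fun u w => ∃ e ∈ S,
            pathExt ends v i e = (u, w) ∨ pathExt ends v i e = (w, u)) Sum.inl ?_ this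
        rintro u w ⟨e, he, hor⟩
        simp only [Finset.mem_filter] at he
        refine Relation.ReflTransGen.single ⟨Sum.inl e, he.2, ?_⟩
        rcases hor with h | h
        · exact Or.inl (by simp [pathExt, h])
        · exact Or.inr (by simp [pathExt, h])
      · exact hto k.val k.isLt
    intro a b
    exact (hvert a).trans (connects_symm _ _ (hvert b))

end Aux

/-- Let `G_i` be obtained from a connected graph `G` by attaching to `v` a path of `i+1` new
edges, with `x` the path edge incident to `v`. Writing `N_r` for the number of connected
spanning subgraphs of `G` with `r` edges and `m = |E|`, the Shapley-Shubik value of `x` in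
the spanning connectivity game on `G_i` is `κ_x(G_i) = Σ_{r=0}^{m} (r+i)! · N_r · (m−r)!`. -/
theorem stmt_10 {V E : Type*} [Fintype V] [Fintype E] [DecidableEq E]
    (ends : E → V × V) (v : V) (hconn : IsCSS ends (Finset.univ : Finset E)) (i : ℕ) :
    shapVal (IsCSS (pathExt ends v i)) (Sum.inr (0 : Fin (i + 1)))
      = ∑ r ∈ Finset.range (Fintype.card E + 1),
          (r + i).factorial
            * (Finset.univ.filter
                (fun S : Finset E => IsCSS ends S ∧ S.card = r)).card
            * (Fintype.card E - r).factorial := by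
  classical
  set m := Fintype.card E with hm
  have hcardSum : Fintype.card (E ⊕ Fin (i + 1)) = m + (i + 1) := by
    simp [Fintype.card_sum, Fintype.card_fin, hm]
  have hfilt : (Finset.univ.filter (fun S : Finset (E ⊕ Fin (i + 1)) =>
      Sum.inr (0 : Fin (i + 1)) ∈ S ∧ IsCSS (pathExt ends v i) S ∧
        ¬ IsCSS (pathExt ends v i) (S.erase (Sum.inr 0)))) =
      Finset.univ.filter (fun S => IsCSS (pathExt ends v i) S) := by
    apply Finset.filter_congr
    intro S _
    constructor
    · rintro ⟨_, h, _⟩; exact h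
    · intro h
      have h' := (win_iff ends v i S).mp h
      refine ⟨h'.1 0, h, fun hbad => ?_⟩
      have := ((win_iff ends v i _).mp hbad).1 0
      simp at this
  rw [shapVal, hfilt]
  -- the bijection with connected spanning subgraphs of `G`
  have hmemToS : ∀ (T : Finset E) (s : E ⊕ Fin (i + 1)),
      s ∈ T.image Sum.inl ∪ Finset.univ.image (Sum.inr : Fin (i+1) → E ⊕ Fin (i+1)) ↔
        (∀ e, s = Sum.inl e → e ∈ T) ∧ True := by
    intro T s
    cases s with
    | inl e => simp [Sum.inl_injective.eq_iff]
    | inr k => simp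
  have hcardToS : ∀ T : Finset E,
      (T.image Sum.inl ∪ Finset.univ.image (Sum.inr : Fin (i+1) → E ⊕ Fin (i+1))).card
        = T.card + (i + 1) := by
    intro T
    rw [Finset.card_union_of_disjoint, Finset.card_image_of_injective _ Sum.inl_injective,
      Finset.card_image_of_injective _ Sum.inr_injective, Finset.card_univ,
      Fintype.card_fin]
    simp [Finset.disjoint_left]
  have hrecover : ∀ S : Finset (E ⊕ Fin (i + 1)), (∀ k : Fin (i+1), Sum.inr k ∈ S) →
      ((restr i S).image Sum.inl ∪
        Finset.univ.image (Sum.inr : Fin (i+1) → E ⊕ Fin (i+1))) = S := by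
    intro S hS
    ext s
    cases s with
    | inl e => simp [restr, Sum.inl_injective.eq_iff]
    | inr k => simp [hS k]
  have key : ∑ S ∈ Finset.univ.filter (fun S => IsCSS (pathExt ends v i) S),
      ((S.card - 1).factorial * (Fintype.card (E ⊕ Fin (i + 1)) - S.card).factorial)
      = ∑ T ∈ Finset.univ.filter (fun T : Finset E => IsCSS ends T),
          (T.card + i).factorial * (m - T.card).factorial := by
    refine Finset.sum_nbij'
      (i := restr i)
      (j := fun T => T.image Sum.inl ∪ Finset.univ.image Sum.inr)
      ?_ ?_ ?_ ?_ ?_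
    · intro S hS
      simp only [Finset.mem_filter, Finset.mem_univ, true_and] at hS ⊢
      exact ((win_iff ends v i S).mp hS).2
    · intro T hT
      simp only [Finset.mem_filter, Finset.mem_univ, true_and] at hT ⊢
      rw [win_iff]
      constructor
      · intro k; simp
      · have hre : restr i (T.image Sum.inl ∪
            Finset.univ.image (Sum.inr : Fin (i+1) → E ⊕ Fin (i+1))) = T := by
          ext e; simp [restr, Sum.inl_injective.eq_iff]
        rw [hre]; exact hT
    · intro S hS
      simp only [Finset.mem_filter, Finset.mem_univ, true_and] at hS
      exact hrecover S ((win_iff ends v i S).mp hS).1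
    · intro T hT
      ext e; simp [restr, Sum.inl_injective.eq_iff]
    · intro S hS
      simp only [Finset.mem_filter, Finset.mem_univ, true_and] at hS
      have h1 := (win_iff ends v i S).mp hS
      have hScard : S.card = (restr i S).card + (i + 1) := by
        conv_lhs => rw [← hrecover S h1.1]
        exact hcardToS _
      have hTle : (restr i S).card ≤ m := by
        rw [hm]; exact Finset.card_le_univ _
      rw [hScard, hcardSum]
      have e1 : (restr i S).card + (i + 1) - 1 = (restr i S).card + i := by omega
      have e2 : m + (i + 1) - ((restr i S).card + (i + 1)) = m - (restr i S).card := by omega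
      rw [e1, e2]
  rw [key]
  -- group by cardinality
  rw [← Finset.sum_fiberwise_of_maps_to (g := Finset.card) (t := Finset.range (m + 1))
    (fun T hT => Finset.mem_range.mpr (Nat.lt_succ_of_le (hm ▸ Finset.card_le_univ T)))]
  refine Finset.sum_congr rfl fun r _ => ?_
  have hsetEq : (Finset.univ.filter (fun T : Finset E => IsCSS ends T)).filter
      (fun T => T.card = r) = Finset.univ.filter (fun S : Finset E => IsCSS ends S ∧ S.card = r) := by
    ext T; simp
  rw [hsetEq]
  rw [Finset.sum_congr rfl (fun T hT => by
    simp only [Finset.mem_filter] at hT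
    rw [hT.2.2])]
  rw [Finset.sum_const, smul_eq_mul]
  ring
end

section
/- Let G = (V, E) be a connected graph containing a bridge k connecting components A = (V_A, E_A) and B = (V_B, E_B) (so E = E_A ∪ E_B ∪ {k}). Then the Shapley-Shubik index of k in the spanning connectivity game on G equals (1/|E|!) · Σ_{i,j} N_i(A) · N_j(B) · (i+j)! · (|E_A|+|E_B|−i−j)!, where N_i(A) and N_j(B) are the numbers of connected spanning subgraphs of A with i edges and of B with j edges, the sum ranging over |V_A|−1 ≤ i ≤ |E_A| and |V_B|−1 ≤ j ≤ |E_B|. -/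
open Finset
open scoped Classical

/-- The graph `G` obtained from components `A` (endpoint map `endsA`) and `B` (endpoint map
`endsB`) by joining `a0 ∈ V_A` to `b0 ∈ V_B` with the bridge `none : Option (EA ⊕ EB)`. -/
def bridgeEnds {VA VB EA EB : Type*} (endsA : EA → VA × VA) (endsB : EB → VB × VB)
    (a0 : VA) (b0 : VB) : Option (EA ⊕ EB) → (VA ⊕ VB) × (VA ⊕ VB)
  | none => (Sum.inl a0, Sum.inr b0)
  | some (Sum.inl e) => (Sum.inl (endsA e).1, Sum.inl (endsA e).2)
  | some (Sum.inr e) => (Sum.inr (endsB e).1, Sum.inr (endsB e).2)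

set_option linter.unusedTactic false
set_option linter.unreachableTactic false
set_option linter.unusedSectionVars false

namespace Connects
variable {V E : Type*} {ends : E → V × V} {S : Finset E}

theorem refl (a : V) : Connects ends S a a := Relation.ReflTransGen.refl

theorem trans {a b c : V} (h1 : Connects ends S a b) (h2 : Connects ends S b c) :
    Connects ends S a c := Relation.ReflTransGen.trans h1 h2

theorem symm {a b : V} (h : Connects ends S a b) : Connects ends S b a := by
  have hs : Symmetric (fun u w : V => ∃ e ∈ S, ends e = (u, w) ∨ ends e = (w, u)) := by
    rintro u w ⟨e, he, h⟩; exact ⟨e, he, h.symm⟩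
  exact (@Relation.ReflTransGen.symmetric _ _ ⟨hs⟩).symm _ _ h

theorem mono {S T : Finset E} (hST : S ⊆ T) {a b : V} (h : Connects ends S a b) :
    Connects ends T a b := by
  refine Relation.ReflTransGen.mono ?_ _ _ h
  rintro u w ⟨e, he, h⟩; exact ⟨e, hST he, h⟩

theorem eq_of_empty {a b : V} (h : Connects ends (∅ : Finset E) a b) : a = b := by
  induction h with
  | refl => rfl
  | tail _ h ih => obtain ⟨e, he, -⟩ := h; simp at he

theorem insert_cases [DecidableEq E] {e : E} {a b : V} (h : Connects ends (insert e S) a b) :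
    Connects ends S a b ∨
      (Connects ends S a (ends e).1 ∧ Connects ends S (ends e).2 b) ∨
      (Connects ends S a (ends e).2 ∧ Connects ends S (ends e).1 b) := by
  induction h with
  | refl => exact Or.inl (Connects.refl a)
  | @tail c d hac hcd ih =>
    obtain ⟨f, hf, hcd⟩ := hcd
    by_cases hfS : f ∈ S
    · have step : Connects ends S c d := Relation.ReflTransGen.single ⟨f, hfS, hcd⟩
      rcases ih with h2 | ⟨h2, h3⟩ | ⟨h2, h3⟩
      · exact Or.inl (h2.trans step)
      · exact Or.inr (Or.inl ⟨h2, h3.trans step⟩)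
      · exact Or.inr (Or.inr ⟨h2, h3.trans step⟩)
    · have hfe : f = e := by
        rcases Finset.mem_insert.mp hf with h | h
        · exact h
        · exact absurd h hfS
      subst hfe
      rcases hcd with h1 | h1
      · have hc : (ends f).1 = c := by rw [h1]
        have hd : (ends f).2 = d := by rw [h1]
        rcases ih with h2 | ⟨h2, h3⟩ | ⟨h2, h3⟩
        · refine Or.inr (Or.inl ⟨?_, ?_⟩)
          · rw [hc]; exact h2
          · rw [hd]; exact Connects.refl d
        · exact Or.inr (Or.inl ⟨h2, by rw [hd]; exact Connects.refl d⟩)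
        · refine Or.inl ?_
          rw [← hd]; exact h2
      · have hd : (ends f).1 = d := by rw [h1]
        have hc : (ends f).2 = c := by rw [h1]
        rcases ih with h2 | ⟨h2, h3⟩ | ⟨h2, h3⟩
        · refine Or.inr (Or.inr ⟨?_, ?_⟩)
          · rw [hc]; exact h2
          · rw [hd]; exact Connects.refl d
        · refine Or.inl ?_
          rw [← hd]; exact h2
        · exact Or.inr (Or.inr ⟨h2, by rw [hd]; exact Connects.refl d⟩)

end Connects

/-- The setoid of connectivity classes. -/
@[reducible] noncomputable def connSetoid {V E : Type*} (ends : E → V × V) (S : Finset E) : Setoid V :=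
  ⟨Connects ends S, ⟨fun _ => Connects.refl _, Connects.symm, Connects.trans⟩⟩

theorem card_le_quot_add_card {V E : Type*} [Fintype V] [DecidableEq E] (ends : E → V × V)
    (S : Finset E) :
    Fintype.card V ≤ Fintype.card (Quotient (connSetoid ends S)) + S.card := by
  induction S using Finset.induction_on with
  | empty =>
    simp only [Finset.card_empty, Nat.add_zero]
    refine Fintype.card_le_of_injective (Quotient.mk (connSetoid ends ∅)) ?_
    intro a b h
    exact Connects.eq_of_empty (Quotient.eq.mp h)
  | @insert e S heS ih =>
    have key : Fintype.card (Quotient (connSetoid ends S))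
        ≤ Fintype.card (Quotient (connSetoid ends (insert e S))) + 1 := by
      have wf : ∀ a b : V, Connects ends S a b →
          (if Connects ends S a (ends e).1
            then (none : Option (Quotient (connSetoid ends (insert e S)))) else some ⟦a⟧)
            = (if Connects ends S b (ends e).1 then none else some ⟦b⟧) := by
        intro a b hab
        have hiff : Connects ends S a (ends e).1 ↔ Connects ends S b (ends e).1 :=
          ⟨fun h' => hab.symm.trans h', fun h' => hab.trans h'⟩
        by_cases h : Connects ends S a (ends e).1
        · rw [if_pos h, if_pos (hiff.mp h)]
        · rw [if_neg h, if_neg (fun h' => h (hiff.mpr h'))]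
          exact congrArg some (Quotient.sound (hab.mono (Finset.subset_insert e S)))
      let g : Quotient (connSetoid ends S) → Option (Quotient (connSetoid ends (insert e S))) :=
        Quotient.lift _ wf
      have hinj : Function.Injective g := by
        intro x y
        induction x using Quotient.ind
        induction y using Quotient.ind
        rename_i a b
        intro h
        simp only [g, Quotient.lift_mk] at h
        by_cases ha : Connects ends S a (ends e).1 <;>
          by_cases hb : Connects ends S b (ends e).1
        · exact Quotient.sound (ha.trans hb.symm)
        · rw [if_pos ha, if_neg hb] at h; exact absurd h (by simp)
        · rw [if_neg ha, if_pos hb] at h; exact absurd h (by simp)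
        · rw [if_neg ha, if_neg hb] at h
          have h2 : Connects ends (insert e S) a b := Quotient.eq.mp (Option.some_injective _ h)
          rcases h2.insert_cases with h3 | ⟨h3, h4⟩ | ⟨h3, h4⟩
          · exact Quotient.sound h3
          · exact absurd h3 ha
          · exact absurd h4.symm hb
      calc Fintype.card (Quotient (connSetoid ends S))
          ≤ Fintype.card (Option (Quotient (connSetoid ends (insert e S)))) :=
            Fintype.card_le_of_injective g hinj
        _ = _ := Fintype.card_option
    rw [Finset.card_insert_of_notMem heS]
    omega

/-- A connected spanning subgraph has at least `|V| - 1` edges. -/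
theorem IsCSS.card_vert_le {V E : Type*} [Fintype V] [DecidableEq E] {ends : E → V × V}
    {S : Finset E} (h : IsCSS ends S) : Fintype.card V ≤ S.card + 1 := by
  have h1 := card_le_quot_add_card ends S
  have h2 : Fintype.card (Quotient (connSetoid ends S)) ≤ 1 := by
    refine Fintype.card_le_one_iff.mpr ?_
    intro x y
    induction x using Quotient.ind
    induction y using Quotient.ind
    exact Quotient.sound (h _ _)
  omega

section Bridge
variable {VA VB EA EB : Type*} [DecidableEq EA] [DecidableEq EB]
  {endsA : EA → VA × VA} {endsB : EB → VB × VB} {a0 : VA} {b0 : VB}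

/-- projection of a coalition to its A-part -/
noncomputable def projA [Fintype EA] (S : Finset (Option (EA ⊕ EB))) : Finset EA :=
  Finset.univ.filter (fun e => some (Sum.inl e) ∈ S)

/-- projection of a coalition to its B-part -/
noncomputable def projB [Fintype EB] (S : Finset (Option (EA ⊕ EB))) : Finset EB :=
  Finset.univ.filter (fun e => some (Sum.inr e) ∈ S)

theorem connects_projA [Fintype EA] {S : Finset (Option (EA ⊕ EB))} {x y : VA ⊕ VB}
    (h : Connects (bridgeEnds endsA endsB a0 b0) S x y) :
    Connects endsA (projA S) (Sum.elim id (fun _ => a0) x) (Sum.elim id (fun _ => a0) y) := by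
  set π : VA ⊕ VB → VA := Sum.elim id (fun _ => a0) with hπ
  induction h with
  | refl => exact Connects.refl _
  | @tail c d hac hcd ih =>
    refine ih.trans ?_
    obtain ⟨f, hf, hcd⟩ := hcd
    match f with
    | none =>
      have h1 : π (Sum.inl a0) = π (Sum.inr b0) := rfl
      rcases hcd with h2 | h2 <;>
      · rw [show (bridgeEnds endsA endsB a0 b0 none) = (Sum.inl a0, Sum.inr b0) from rfl,
          Prod.mk.injEq] at h2
        obtain ⟨h3, h4⟩ := h2
        rw [← h3, ← h4]
        first
          | exact h1 ▸ Connects.refl _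
          | exact (h1 ▸ Connects.refl _ :
              Connects endsA (projA S) (π (Sum.inl a0)) (π (Sum.inr b0))).symm
    | some (Sum.inl e) =>
      have he : e ∈ projA (S := S) := Finset.mem_filter.mpr ⟨Finset.mem_univ _, hf⟩
      rcases hcd with h2 | h2 <;>
      · rw [show (bridgeEnds endsA endsB a0 b0 (some (Sum.inl e)))
            = (Sum.inl (endsA e).1, Sum.inl (endsA e).2) from rfl, Prod.mk.injEq] at h2
        obtain ⟨h3, h4⟩ := h2
        rw [← h3, ← h4]
        refine Relation.ReflTransGen.single ⟨e, he, ?_⟩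
        simp [hπ]
    | some (Sum.inr e) =>
      rcases hcd with h2 | h2 <;>
      · rw [show (bridgeEnds endsA endsB a0 b0 (some (Sum.inr e)))
            = (Sum.inr (endsB e).1, Sum.inr (endsB e).2) from rfl, Prod.mk.injEq] at h2
        obtain ⟨h3, h4⟩ := h2
        rw [← h3, ← h4]
        exact Connects.refl _

theorem connects_projB [Fintype EB] {S : Finset (Option (EA ⊕ EB))} {x y : VA ⊕ VB}
    (h : Connects (bridgeEnds endsA endsB a0 b0) S x y) :
    Connects endsB (projB S) (Sum.elim (fun _ => b0) id x) (Sum.elim (fun _ => b0) id y) := by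
  set π : VA ⊕ VB → VB := Sum.elim (fun _ => b0) id with hπ
  induction h with
  | refl => exact Connects.refl _
  | @tail c d hac hcd ih =>
    refine ih.trans ?_
    obtain ⟨f, hf, hcd⟩ := hcd
    match f with
    | none =>
      have h1 : π (Sum.inl a0) = π (Sum.inr b0) := rfl
      rcases hcd with h2 | h2 <;>
      · rw [show (bridgeEnds endsA endsB a0 b0 none) = (Sum.inl a0, Sum.inr b0) from rfl,
          Prod.mk.injEq] at h2
        obtain ⟨h3, h4⟩ := h2
        rw [← h3, ← h4]
        first
          | exact h1 ▸ Connects.refl _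
          | exact (h1 ▸ Connects.refl _ :
              Connects endsB (projB S) (π (Sum.inl a0)) (π (Sum.inr b0))).symm
    | some (Sum.inr e) =>
      have he : e ∈ projB (S := S) := Finset.mem_filter.mpr ⟨Finset.mem_univ _, hf⟩
      rcases hcd with h2 | h2 <;>
      · rw [show (bridgeEnds endsA endsB a0 b0 (some (Sum.inr e)))
            = (Sum.inr (endsB e).1, Sum.inr (endsB e).2) from rfl, Prod.mk.injEq] at h2
        obtain ⟨h3, h4⟩ := h2
        rw [← h3, ← h4]
        refine Relation.ReflTransGen.single ⟨e, he, ?_⟩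
        simp [hπ]
    | some (Sum.inl e) =>
      rcases hcd with h2 | h2 <;>
      · rw [show (bridgeEnds endsA endsB a0 b0 (some (Sum.inl e)))
            = (Sum.inl (endsA e).1, Sum.inl (endsA e).2) from rfl, Prod.mk.injEq] at h2
        obtain ⟨h3, h4⟩ := h2
        rw [← h3, ← h4]
        exact Connects.refl _

theorem connects_liftA {S : Finset (Option (EA ⊕ EB))} {T : Finset EA}
    (hsub : ∀ e ∈ T, some (Sum.inl e) ∈ S) {a a' : VA} (h : Connects endsA T a a') :
    Connects (bridgeEnds endsA endsB a0 b0) S (Sum.inl a) (Sum.inl a') := by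
  refine Relation.ReflTransGen.lift Sum.inl ?_ _ _ h
  rintro u w ⟨e, he, h2⟩
  refine ⟨some (Sum.inl e), hsub e he, ?_⟩
  rcases h2 with h2 | h2 <;> [left; right] <;>
    simp [bridgeEnds, h2]

theorem connects_liftB {S : Finset (Option (EA ⊕ EB))} {T : Finset EB}
    (hsub : ∀ e ∈ T, some (Sum.inr e) ∈ S) {b b' : VB} (h : Connects endsB T b b') :
    Connects (bridgeEnds endsA endsB a0 b0) S (Sum.inr b) (Sum.inr b') := by
  refine Relation.ReflTransGen.lift Sum.inr ?_ _ _ h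
  rintro u w ⟨e, he, h2⟩
  refine ⟨some (Sum.inr e), hsub e he, ?_⟩
  rcases h2 with h2 | h2 <;> [left; right] <;>
    simp [bridgeEnds, h2]

theorem inl_of_connects {S : Finset (Option (EA ⊕ EB))} (hS : none ∉ S) {x : VA ⊕ VB} {a : VA}
    (h : Connects (bridgeEnds endsA endsB a0 b0) S (Sum.inl a) x) : ∃ a', x = Sum.inl a' := by
  induction h with
  | refl => exact ⟨a, rfl⟩
  | @tail c d hac hcd ih =>
    obtain ⟨a'', rfl⟩ := ih
    obtain ⟨f, hf, hcd⟩ := hcd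
    match f with
    | none => exact absurd hf hS
    | some (Sum.inl e) =>
      rw [show (bridgeEnds endsA endsB a0 b0 (some (Sum.inl e)))
            = (Sum.inl (endsA e).1, Sum.inl (endsA e).2) from rfl] at hcd
      rcases hcd with h2 | h2
      · rw [Prod.mk.injEq] at h2; exact ⟨_, h2.2.symm⟩
      · rw [Prod.mk.injEq] at h2; exact ⟨_, h2.1.symm⟩
    | some (Sum.inr e) =>
      rw [show (bridgeEnds endsA endsB a0 b0 (some (Sum.inr e)))
            = (Sum.inr (endsB e).1, Sum.inr (endsB e).2) from rfl] at hcd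
      rcases hcd with h2 | h2
      · rw [Prod.mk.injEq] at h2; exact absurd h2.1 (by simp)
      · rw [Prod.mk.injEq] at h2; exact absurd h2.2 (by simp)

theorem not_win_of_not_mem {S : Finset (Option (EA ⊕ EB))} (hS : none ∉ S) :
    ¬ IsCSS (bridgeEnds endsA endsB a0 b0) S := by
  intro h
  obtain ⟨a', ha'⟩ := inl_of_connects hS (h (Sum.inl a0) (Sum.inr b0))
  simp at ha'

theorem win_iff_s14 [Fintype EA] [Fintype EB] {S : Finset (Option (EA ⊕ EB))} (hS : none ∈ S) :
    IsCSS (bridgeEnds endsA endsB a0 b0) S ↔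
      IsCSS endsA (projA S) ∧ IsCSS endsB (projB S) := by
  constructor
  · intro h
    constructor
    · intro a a'
      simpa using connects_projA (h (Sum.inl a) (Sum.inl a'))
    · intro b b'
      simpa using connects_projB (h (Sum.inr b) (Sum.inr b'))
  · rintro ⟨hA, hB⟩
    have bstep : Connects (bridgeEnds endsA endsB a0 b0) S (Sum.inr b0) (Sum.inl a0) :=
      Relation.ReflTransGen.single ⟨none, hS, Or.inr rfl⟩
    have key : ∀ x : VA ⊕ VB, Connects (bridgeEnds endsA endsB a0 b0) S x (Sum.inl a0) := by
      intro x
      match x with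
      | Sum.inl a =>
        exact connects_liftA (fun e he => (Finset.mem_filter.mp he).2) (hA a a0)
      | Sum.inr b =>
        exact (connects_liftB (fun e he => (Finset.mem_filter.mp he).2) (hB b b0)).trans bstep
    intro x y
    exact (key x).trans (key y).symm

/-- Reconstruction of a coalition from parts. -/
noncomputable def jmap (T : Finset EA) (U : Finset EB) : Finset (Option (EA ⊕ EB)) :=
  insert none (T.image (fun e => some (Sum.inl e)) ∪ U.image (fun e => some (Sum.inr e)))

theorem projA_jmap [Fintype EA] [Fintype EB] (T : Finset EA) (U : Finset EB) :
    projA (jmap T U) = T := by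
  ext e
  simp [projA, jmap, Sum.inl.injEq]

theorem projB_jmap [Fintype EA] [Fintype EB] (T : Finset EA) (U : Finset EB) :
    projB (jmap T U) = U := by
  ext e
  simp [projB, jmap, Sum.inr.injEq]

theorem jmap_proj [Fintype EA] [Fintype EB] {S : Finset (Option (EA ⊕ EB))} (hS : none ∈ S) :
    jmap (projA S) (projB S) = S := by
  ext x
  match x with
  | none => simp [jmap, hS]
  | some (Sum.inl e) => simp [jmap, projA]
  | some (Sum.inr e) => simp [jmap, projB]

theorem jmap_card [Fintype EA] [Fintype EB] (T : Finset EA) (U : Finset EB) :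
    (jmap T U).card = T.card + U.card + 1 := by
  rw [jmap, Finset.card_insert_of_notMem (by simp), Finset.card_union_of_disjoint (by
    simp [Finset.disjoint_left]),
    Finset.card_image_of_injective _ (fun a b h => by simpa using h),
    Finset.card_image_of_injective _ (fun a b h => by simpa using h)]

end Bridge

/-- Group a sum over subsets satisfying `P` by cardinality. -/
theorem sum_card_group {α : Type*} [Fintype α] (P : Finset α → Prop) (g : ℕ → ℕ) :
    ∑ T ∈ Finset.univ.filter (fun T => P T), g T.card
      = ∑ i ∈ Finset.range (Fintype.card α + 1),
          (Finset.univ.filter (fun T : Finset α => P T ∧ T.card = i)).card * g i := by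
  rw [← Finset.sum_fiberwise_of_maps_to (g := Finset.card)
    (t := Finset.range (Fintype.card α + 1))
    (fun T _ => Finset.mem_range.mpr (Nat.lt_succ_of_le (Finset.card_le_univ T)))]
  refine Finset.sum_congr rfl fun i _ => ?_
  rw [Finset.filter_filter]
  rw [Finset.sum_congr rfl (fun T hT => by rw [(Finset.mem_filter.mp hT).2.2]),
    Finset.sum_const, smul_eq_mul]

/-- For a connected graph with a bridge `k` joining connected components `A` and `B`, the
Shapley-Shubik index of `k` in the spanning connectivity game equals
`(1/|E|!) Σ_{i=|V_A|−1}^{|E_A|} Σ_{j=|V_B|−1}^{|E_B|} N_i(A) N_j(B) (i+j)! (|E_A|+|E_B|−i−j)!`. -/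
theorem stmt_14 {VA VB EA EB : Type*} [Fintype VA] [Fintype VB] [Fintype EA] [Fintype EB]
    [DecidableEq EA] [DecidableEq EB]
    (endsA : EA → VA × VA) (endsB : EB → VB × VB) (a0 : VA) (b0 : VB)
    (hA : IsCSS endsA (Finset.univ : Finset EA))
    (hB : IsCSS endsB (Finset.univ : Finset EB)) :
    shapIdx (IsCSS (bridgeEnds endsA endsB a0 b0)) (none : Option (EA ⊕ EB))
      = (1 / ((Fintype.card EA + Fintype.card EB + 1).factorial : ℚ))
        * ∑ i ∈ Finset.Icc (Fintype.card VA - 1) (Fintype.card EA),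
            ∑ j ∈ Finset.Icc (Fintype.card VB - 1) (Fintype.card EB),
              ((Finset.univ.filter
                  (fun S : Finset EA => IsCSS endsA S ∧ S.card = i)).card : ℚ)
                * ((Finset.univ.filter
                    (fun S : Finset EB => IsCSS endsB S ∧ S.card = j)).card : ℚ)
                * ((i + j).factorial : ℚ)
                * (((Fintype.card EA + Fintype.card EB - i - j).factorial : ℚ)) := by
  classical
  set n := Fintype.card EA with hn
  set m := Fintype.card EB with hm
  have hcardE : Fintype.card (Option (EA ⊕ EB)) = n + m + 1 := by
    simp [hn, hm]
  set NA : ℕ → ℕ := fun i =>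
    (Finset.univ.filter (fun S : Finset EA => IsCSS endsA S ∧ S.card = i)).card with hNA
  set NB : ℕ → ℕ := fun j =>
    (Finset.univ.filter (fun S : Finset EB => IsCSS endsB S ∧ S.card = j)).card with hNB
  have hNA0 : ∀ i, i < Fintype.card VA - 1 → NA i = 0 := by
    intro i hi
    rw [hNA]
    simp only [Finset.card_eq_zero, Finset.filter_eq_empty_iff]
    rintro T - ⟨h1, h2⟩
    have := h1.card_vert_le
    omega
  have hNB0 : ∀ j, j < Fintype.card VB - 1 → NB j = 0 := by
    intro j hj
    rw [hNB]
    simp only [Finset.card_eq_zero, Finset.filter_eq_empty_iff]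
    rintro T - ⟨h1, h2⟩
    have := h1.card_vert_le
    omega
  -- the ℕ-valued identity
  have key : shapVal (IsCSS (bridgeEnds endsA endsB a0 b0)) (none : Option (EA ⊕ EB))
      = ∑ i ∈ Finset.Icc (Fintype.card VA - 1) n, ∑ j ∈ Finset.Icc (Fintype.card VB - 1) m,
          NA i * NB j * (i + j).factorial * (n + m - i - j).factorial := by
    rw [shapVal]
    have hfilt : (Finset.univ.filter (fun S : Finset (Option (EA ⊕ EB)) =>
        none ∈ S ∧ IsCSS (bridgeEnds endsA endsB a0 b0) S ∧
          ¬ IsCSS (bridgeEnds endsA endsB a0 b0) (S.erase none)))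
        = Finset.univ.filter (fun S => none ∈ S ∧ IsCSS (bridgeEnds endsA endsB a0 b0) S) := by
      refine Finset.filter_congr fun S _ => ?_
      constructor
      · rintro ⟨h1, h2, -⟩; exact ⟨h1, h2⟩
      · rintro ⟨h1, h2⟩
        exact ⟨h1, h2, not_win_of_not_mem (Finset.notMem_erase _ _)⟩
    rw [hfilt]
    -- reindex by pairs of subsets
    have step2 : ∑ S ∈ Finset.univ.filter
          (fun S => none ∈ S ∧ IsCSS (bridgeEnds endsA endsB a0 b0) S),
          (S.card - 1).factorial * (Fintype.card (Option (EA ⊕ EB)) - S.card).factorial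
        = ∑ p ∈ (Finset.univ.filter (fun T : Finset EA => IsCSS endsA T)) ×ˢ
            (Finset.univ.filter (fun U : Finset EB => IsCSS endsB U)),
            (p.1.card + p.2.card).factorial * (n + m - p.1.card - p.2.card).factorial := by
      refine Finset.sum_nbij' (fun S => (projA S, projB S)) (fun p => jmap p.1 p.2) ?_ ?_ ?_ ?_ ?_
      · intro S hS
        obtain ⟨h1, h2⟩ := (Finset.mem_filter.mp hS).2
        obtain ⟨h3, h4⟩ := (win_iff_s14 h1).mp h2
        simp only [Finset.mem_product, Finset.mem_filter, Finset.mem_univ, true_and]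
        exact ⟨h3, h4⟩
      · rintro ⟨T, U⟩ hp
        simp only [Finset.mem_product, Finset.mem_filter, Finset.mem_univ, true_and] at hp
        have hnone : none ∈ jmap T U := Finset.mem_insert_self _ _
        refine Finset.mem_filter.mpr ⟨Finset.mem_univ _, hnone, ?_⟩
        rw [win_iff_s14 hnone, projA_jmap, projB_jmap]
        exact hp
      · intro S hS
        exact jmap_proj (Finset.mem_filter.mp hS).2.1
      · rintro ⟨T, U⟩ hp
        dsimp only
        rw [projA_jmap, projB_jmap]
      · intro S hS
        dsimp only
        have hS' : none ∈ S := (Finset.mem_filter.mp hS).2.1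
        have hcard : S.card = (projA S).card + (projB S).card + 1 := by
          conv_lhs => rw [← jmap_proj hS']
          exact jmap_card _ _
        rw [hcard, hcardE]
        have e1 : (projA S).card + (projB S).card + 1 - 1
            = (projA S).card + (projB S).card := by omega
        have e2 : n + m + 1 - ((projA S).card + (projB S).card + 1)
            = n + m - (projA S).card - (projB S).card := by omega
        rw [e1, e2]
    rw [step2, Finset.sum_product]
    -- group inner sums by cardinality
    have inner : ∀ T : Finset EA,
        ∑ U ∈ Finset.univ.filter (fun U : Finset EB => IsCSS endsB U),
          (T.card + U.card).factorial * (n + m - T.card - U.card).factorial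
        = ∑ j ∈ Finset.range (m + 1),
            NB j * ((T.card + j).factorial * (n + m - T.card - j).factorial) := by
      intro T
      exact sum_card_group (fun U => IsCSS endsB U)
        (fun j => (T.card + j).factorial * (n + m - T.card - j).factorial)
    calc ∑ T ∈ Finset.univ.filter (fun T : Finset EA => IsCSS endsA T),
          ∑ U ∈ Finset.univ.filter (fun U : Finset EB => IsCSS endsB U),
            (T.card + U.card).factorial * (n + m - T.card - U.card).factorial
        = ∑ T ∈ Finset.univ.filter (fun T : Finset EA => IsCSS endsA T),
            ∑ j ∈ Finset.range (m + 1),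
              NB j * ((T.card + j).factorial * (n + m - T.card - j).factorial) :=
          Finset.sum_congr rfl fun T _ => inner T
      _ = ∑ i ∈ Finset.range (n + 1), NA i * ∑ j ∈ Finset.range (m + 1),
              NB j * ((i + j).factorial * (n + m - i - j).factorial) :=
          sum_card_group (fun T => IsCSS endsA T)
            (fun i => ∑ j ∈ Finset.range (m + 1),
              NB j * ((i + j).factorial * (n + m - i - j).factorial))
      _ = ∑ i ∈ Finset.range (n + 1), ∑ j ∈ Finset.range (m + 1),
              NA i * NB j * (i + j).factorial * (n + m - i - j).factorial := by
          refine Finset.sum_congr rfl fun i _ => ?_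
          rw [Finset.mul_sum]
          refine Finset.sum_congr rfl fun j _ => ?_
          ring
      _ = ∑ i ∈ Finset.Icc (Fintype.card VA - 1) n, ∑ j ∈ Finset.Icc (Fintype.card VB - 1) m,
              NA i * NB j * (i + j).factorial * (n + m - i - j).factorial := by
          have hsubA : Finset.Icc (Fintype.card VA - 1) n ⊆ Finset.range (n + 1) := by
            intro i hi; rw [Finset.mem_Icc] at hi; rw [Finset.mem_range]; omega
          have hsubB : Finset.Icc (Fintype.card VB - 1) m ⊆ Finset.range (m + 1) := by
            intro j hj; rw [Finset.mem_Icc] at hj; rw [Finset.mem_range]; omega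
          have hzA : ∀ i ∈ Finset.range (n + 1), i ∉ Finset.Icc (Fintype.card VA - 1) n →
              (∑ j ∈ Finset.range (m + 1),
                NA i * NB j * (i + j).factorial * (n + m - i - j).factorial) = 0 := by
            intro i hi hi2
            rw [Finset.mem_range] at hi; rw [Finset.mem_Icc] at hi2
            have h0 : NA i = 0 := hNA0 i (by omega)
            refine Finset.sum_eq_zero fun j _ => ?_
            rw [h0]; ring
          rw [← Finset.sum_subset hsubA hzA]
          refine Finset.sum_congr rfl fun i _ => ?_
          have hzB : ∀ j ∈ Finset.range (m + 1), j ∉ Finset.Icc (Fintype.card VB - 1) m →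
              NA i * NB j * (i + j).factorial * (n + m - i - j).factorial = 0 := by
            intro j hj hj2
            rw [Finset.mem_range] at hj; rw [Finset.mem_Icc] at hj2
            have h0 : NB j = 0 := hNB0 j (by omega)
            rw [h0]; ring
          rw [← Finset.sum_subset hsubB hzB]
  -- assemble
  rw [shapIdx, key, hcardE]
  push_cast
  rw [div_eq_mul_inv, mul_comm, one_div]
end

section
/- Let (N, v) be a simple game with |N| = n, and let v_i (for i ≥ 1) denote the game on N ∪ {x_1, …, x_i} where a coalition wins iff it contains all of x_1,…,x_i and its restriction to N wins in v. Writing W_r for the number of winning coalitions of v of size r, the Shapley-Shubik value of x_1 in v_i equals Σ_{r=0}^{n} B_r · (r+i−1)! · (n−r)!, where B_r is the number of coalitions S ⊆ N of size r with v(S) = 1. [In particular, the vector of values (κ_{x_1}(v_i))_{i=1,…,n+1} determines all B_r via an invertible factorial Hankel system.] -/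
open Finset
open scoped Classical

/-- The game `v_i` on `N ⊕ Fin i`: a coalition wins iff it contains all the new players
`x_1, …, x_i` and its restriction to `N` wins in `v`. -/
def extByPath {N : Type*} [Fintype N] (v : Finset N → ℕ) (i : ℕ)
    (S : Finset (N ⊕ Fin i)) : Prop :=
  (∀ k : Fin i, Sum.inr k ∈ S) ∧
    v (Finset.univ.filter (fun a : N => Sum.inl a ∈ S)) = 1

/-- For a simple game `(N, v)` with `|N| = n` and the game `v_i` on `N ∪ {x_1,…,x_i}` where a
coalition wins iff it contains all of `x_1,…,x_i` and its restriction to `N` wins in `v`,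
the Shapley-Shubik value of `x_1` in `v_i` equals `Σ_{r=0}^{n} B_r · (r+i−1)! · (n−r)!`,
where `B_r` is the number of winning coalitions of `v` of size `r`. -/
theorem stmt_18 {N : Type*} [Fintype N] [DecidableEq N] (v : Finset N → ℕ)
    (hval : ∀ S, v S = 0 ∨ v S = 1)
    (hmono : ∀ S T : Finset N, S ⊆ T → v S ≤ v T)
    (h0 : v ∅ = 0) (h1 : v Finset.univ = 1)
    (i : ℕ) (hi : 0 < i) :
    shapVal (extByPath v i) (Sum.inr (⟨0, hi⟩ : Fin i))
      = ∑ r ∈ Finset.range (Fintype.card N + 1),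
          (Finset.univ.filter
              (fun S : Finset N => S.card = r ∧ v S = 1)).card
            * (r + i - 1).factorial * (Fintype.card N - r).factorial := by
    classical
  set n := Fintype.card N with hn
  have hcard : Fintype.card (N ⊕ Fin i) = n + i := by simp [hn]
  have hfilt : (Finset.univ.filter (fun S : Finset (N ⊕ Fin i) =>
      Sum.inr (⟨0, hi⟩ : Fin i) ∈ S ∧ extByPath v i S ∧
        ¬ extByPath v i (S.erase (Sum.inr ⟨0, hi⟩))))
      = Finset.univ.filter (fun S => extByPath v i S) := by
    apply Finset.filter_congr
    intro S _
    constructor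
    · rintro ⟨_, h, _⟩; exact h
    · intro h
      refine ⟨h.1 _, h, ?_⟩
      rintro ⟨hall, -⟩
      exact (Finset.notMem_erase _ _) (hall ⟨0, hi⟩)
  rw [shapVal, hfilt]
  have key : ∑ S ∈ Finset.univ.filter (fun S : Finset (N ⊕ Fin i) => extByPath v i S),
      (S.card - 1).factorial * (Fintype.card (N ⊕ Fin i) - S.card).factorial
    = ∑ T ∈ Finset.univ.filter (fun T : Finset N => v T = 1),
        (T.card + i - 1).factorial * (n - T.card).factorial := by
    apply Finset.sum_bij'
      (i := fun S _ => Finset.univ.filter (fun a : N => Sum.inl a ∈ S))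
      (j := fun T _ => T.image Sum.inl ∪ (Finset.univ : Finset (Fin i)).image Sum.inr)
    · intro S hS
      simp only [Finset.mem_filter, Finset.mem_univ, true_and] at hS ⊢
      convert hS.2 using 2
      ext a; simp
    · intro T hT
      simp only [Finset.mem_filter, Finset.mem_univ, true_and] at hT ⊢
      constructor
      · intro k; simp
      · convert hT using 2
        ext a
        simp
    · intro S hS
      simp only [Finset.mem_filter, Finset.mem_univ, true_and] at hS
      ext x
      cases x with
      | inl a => simp
      | inr k => simp [hS.1 k]
    · intro T hT
      ext a
      simp
    · intro S hS
      simp only [Finset.mem_filter, Finset.mem_univ, true_and] at hS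
      have hSeq : S.card = (Finset.univ.filter (fun a : N => Sum.inl a ∈ S)).card + i := by
        have : S = (Finset.univ.filter (fun a : N => Sum.inl a ∈ S)).image Sum.inl
            ∪ (Finset.univ : Finset (Fin i)).image Sum.inr := by
          ext x
          cases x with
          | inl a => simp
          | inr k => simp [hS.1 k]
        conv_lhs => rw [this]
        rw [Finset.card_union_of_disjoint (by simp [Finset.disjoint_left]),
          Finset.card_image_of_injective _ Sum.inl_injective,
          Finset.card_image_of_injective _ Sum.inr_injective, Finset.card_univ,
          Fintype.card_fin]
      rw [hSeq, hcard, Nat.add_sub_add_right]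
  rw [key]
  rw [← Finset.sum_fiberwise_of_maps_to (g := Finset.card) (t := Finset.range (n + 1))
    (fun T _ => Finset.mem_range.mpr (Nat.lt_succ_of_le (Finset.card_le_univ T)))]
  apply Finset.sum_congr rfl
  intro r _
  have hfe : ((Finset.univ.filter (fun T : Finset N => v T = 1)).filter
      (fun T => T.card = r))
      = Finset.univ.filter (fun S : Finset N => S.card = r ∧ v S = 1) := by
    rw [Finset.filter_filter]
    apply Finset.filter_congr
    intro T _
    tauto
  rw [show ∀ x y z : ℕ, x * y * z = x * (y * z) from fun x y z => Nat.mul_assoc x y z,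
    ← hfe]
  rw [Finset.sum_congr rfl (fun T hT => ?_), Finset.sum_const, smul_eq_mul]
  simp only [Finset.mem_filter] at hT
  rw [hT.2]
end
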